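/- Let N be a sum-GNN with L layers and let D′ ⊆ D be datasets. For every vertex v of enc(D′), every layer ℓ ∈ {0,…,L}, and every channel i ∈ {1,…,δ_ℓ}, the following hold, where v_ℓ and v′_ℓ are the vectors computed for v in layer ℓ when N is applied to enc(D) and enc(D′) respectively: (1) if i is stable at layer ℓ then v′_ℓ[i] = v_ℓ[i]; (2) if i is increasing at layer ℓ then v′_ℓ[i] ≤ v_ℓ[i]; (3) if i is decreasing at layer ℓ then v′_ℓ[i] ≥ v_ℓ[i]. -/

import Mathlib

/-! ## Sum-GNNs, the canonical encoding/decoding and transformation, and Datalog -/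

/-- A fact over the GNN signature: a unary fact `U_p(a)` for a channel/unary predicate
`p : Fin δ`, or a binary fact `R^c(a,b)` for a colour/binary predicate `c : Col`.
Constants are modelled as natural numbers.  A dataset is a (finite) set of facts. -/
inductive GFact (Col : Type) (δ : ℕ) : Type
  | unary (p : Fin δ) (a : ℕ)
  | binary (c : Col) (a b : ℕ)

/-- A sum-GNN with `L ≥ 1` layers over the colour set `Col`: layer `ℓ ∈ {1,…,L}` uses the
matrix `A ℓ` (of dimension `δ ℓ × δ (ℓ-1)`), the matrices `B c ℓ` for each colour `c`,
the bias vector `bias ℓ`, and the monotonically increasing activation function `act ℓ`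
with non-negative range; `t` is the threshold of the step classification function
`cls_t`, which outputs `1` on input `x` iff `t ≤ x`.  Dimensions satisfy `δ L = δ 0`. -/
structure SumGNN (Col : Type) : Type where
  L : ℕ
  hL : 1 ≤ L
  δ : ℕ → ℕ
  hδL : δ L = δ 0
  A : (ℓ : ℕ) → Fin (δ ℓ) → Fin (δ (ℓ - 1)) → ℝ
  B : Col → (ℓ : ℕ) → Fin (δ ℓ) → Fin (δ (ℓ - 1)) → ℝ
  bias : (ℓ : ℕ) → Fin (δ ℓ) → ℝ
  act : ℕ → ℝ → ℝ
  act_mono : ∀ ℓ, Monotone (act ℓ)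
  act_nonneg : ∀ ℓ x, 0 ≤ act ℓ x
  t : ℝ

variable {Col : Type} {δ : ℕ}

open Classical

/-- The constants occurring in a fact. -/
def GFact.constants : GFact Col δ → Set ℕ
  | .unary _ a => {a}
  | .binary _ a b => {a, b}

/-- The constants occurring in a dataset. -/
def constsOf (D : Set (GFact Col δ)) : Set ℕ := ⋃ f ∈ D, f.constants

/-- The real vector labelling the vertex `v_a` of the canonical encoding `enc D` of the
dataset `D` at layer `ℓ` when the sum-GNN `N` is applied to `enc D`:  at layer `0` it is
the Boolean labelling of `enc D` (channel `i` is `1` iff `U_i(a) ∈ D`), and at layer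
`ℓ+1` it is `act (ℓ+1) (bias + A ·(previous vector) + Σ_c B^c ·(Σ_{c-neighbours} their
previous vectors))`, computed componentwise. -/
noncomputable def gnnVal [Fintype Col] (N : SumGNN Col) (D : Set (GFact Col (N.δ 0))) :
    (ℓ : ℕ) → ℕ → Fin (N.δ ℓ) → ℝ
  | 0, a, i => if GFact.unary i a ∈ D then 1 else 0
  | (ℓ + 1), a, i =>
      N.act (ℓ + 1) (N.bias (ℓ + 1) i
        + (∑ j : Fin (N.δ ℓ), N.A (ℓ + 1) i j * gnnVal N D ℓ a j)
        + ∑ c : Col, ∑ j : Fin (N.δ ℓ),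
            N.B c (ℓ + 1) i j * ∑ᶠ b ∈ {b : ℕ | GFact.binary c a b ∈ D}, gnnVal N D ℓ b j)

/-- The canonical dataset transformation `T_N` induced by the sum-GNN `N`:
`T_N(D) = dec(N(enc(D)))`, i.e. it contains the unary fact `U_p(a)` for each constant
`a` of `D` and each channel `p` such that the classification function `cls_t` outputs
`1` on the `p`-th component of the layer-`L` vector of the vertex `v_a`. -/
def TN [Fintype Col] (N : SumGNN Col) (D : Set (GFact Col (N.δ 0))) :
    Set (GFact Col (N.δ 0)) :=
  { f | ∃ a ∈ constsOf D, ∃ p : Fin (N.δ 0),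
      f = GFact.unary p a ∧ N.t ≤ gnnVal N D N.L a (Fin.cast N.hδL.symm p) }

/-! ### Datalog -/

/-- A term: a variable or a constant (both drawn from countably infinite sets). -/
inductive DTerm : Type
  | var (x : ℕ)
  | const (a : ℕ)

/-- An atom over the GNN signature, possibly mentioning variables. -/
inductive DAtom (Col : Type) (δ : ℕ) : Type
  | unary (p : Fin δ) (t : DTerm)
  | binary (c : Col) (t₁ t₂ : DTerm)

/-- A body literal: an atom or an inequality `t₁ ≉ t₂`. -/
inductive DLit (Col : Type) (δ : ℕ) : Type
  | atom (a : DAtom Col δ)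
  | neq (t₁ t₂ : DTerm)

/-- Applying a substitution (a map from variables to constants) to a term. -/
def DTerm.subst (ν : ℕ → ℕ) : DTerm → ℕ
  | .var x => ν x
  | .const a => a

/-- Applying a substitution to an atom, producing a ground atom (a fact). -/
def DAtom.subst (ν : ℕ → ℕ) : DAtom Col δ → GFact Col δ
  | .unary p t => .unary p (t.subst ν)
  | .binary c t₁ t₂ => .binary c (t₁.subst ν) (t₂.subst ν)

/-- The variables of a term. -/
def DTerm.varList : DTerm → List ℕ
  | .var x => [x]
  | .const _ => []

/-- The variables of an atom. -/
def DAtom.varList : DAtom Col δ → List ℕ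
  | .unary _ t => t.varList
  | .binary _ t₁ t₂ => t₁.varList ++ t₂.varList

/-- The variables of a literal. -/
def DLit.varList : DLit Col δ → List ℕ
  | .atom a => a.varList
  | .neq t₁ t₂ => t₁.varList ++ t₂.varList

/-- A Datalog rule `B₁ ∧ … ∧ Bₙ → H`: each inequality in the body mentions two
different terms, and every variable of the rule occurs in some body atom. -/
structure DRule (Col : Type) (δ : ℕ) : Type where
  body : List (DLit Col δ)
  head : DAtom Col δ
  neq_distinct : ∀ t₁ t₂ : DTerm, DLit.neq t₁ t₂ ∈ body → t₁ ≠ t₂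
  safe : ∀ x ∈ head.varList ++ body.flatMap DLit.varList,
      ∃ a : DAtom Col δ, DLit.atom a ∈ body ∧ x ∈ a.varList

/-- The variables of a rule, as a finite set. -/
def DRule.varFinset (r : DRule Col δ) : Finset ℕ :=
  (r.head.varList ++ r.body.flatMap DLit.varList).toFinset

/-- Satisfaction of a ground literal in a dataset: `D ⊨ B` iff `B ∈ D` for a ground atom
`B`, and `D ⊨ a₁ ≉ a₂` iff `a₁ ≠ a₂`. -/
def DLit.sat (D : Set (GFact Col δ)) (ν : ℕ → ℕ) : DLit Col δ → Prop
  | .atom a => a.subst ν ∈ D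
  | .neq t₁ t₂ => t₁.subst ν ≠ t₂.subst ν

/-- The immediate consequence operator `T_r` of a rule `r`: `T_r(D)` contains `Hν` for
each substitution `ν` such that `D ⊨ Bᵢν` for every body literal `Bᵢ`. -/
def Tr (r : DRule Col δ) (D : Set (GFact Col δ)) : Set (GFact Col δ) :=
  { f | ∃ ν : ℕ → ℕ, (∀ B ∈ r.body, B.sat D ν) ∧ f = r.head.subst ν }

/-- The immediate consequence operator of a program: `T_P(D) = ⋃_{r ∈ P} T_r(D)`. -/
def TP (P : List (DRule Col δ)) (D : Set (GFact Col δ)) : Set (GFact Col δ) :=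
  ⋃ r ∈ P, Tr r D

/-- The dataset `D_r^ν` consisting of `Bᵢν` for each body atom `Bᵢ` of the rule `r`. -/
def bodyDataset (r : DRule Col δ) (ν : ℕ → ℕ) : Set (GFact Col δ) :=
  { f | ∃ a : DAtom Col δ, DLit.atom a ∈ r.body ∧ f = a.subst ν }

/-! ### Channel classification -/

/-- `Safe N ℓ i`: channel `i` is safe at layer `ℓ`.  Every channel is safe at layer `0`;
a channel `i` is safe at layer `ℓ+1` if the `i`-th row of `A (ℓ+1)` and of each
`B c (ℓ+1)` contains only non-negative values and the `j`-th entry of each such row is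
zero for every `j` unsafe at layer `ℓ`. -/
def Safe (N : SumGNN Col) : (ℓ : ℕ) → Fin (N.δ ℓ) → Prop
  | 0, _ => True
  | (ℓ + 1), i =>
      (∀ j, 0 ≤ N.A (ℓ + 1) i j) ∧ (∀ c : Col, ∀ j, 0 ≤ N.B c (ℓ + 1) i j) ∧
      (∀ j : Fin (N.δ ℓ), ¬ Safe N ℓ j →
        N.A (ℓ + 1) i j = 0 ∧ ∀ c : Col, N.B c (ℓ + 1) i j = 0)

/-- The classification of channel `i` at layer `ℓ` as a triple of propositions
`(stable, increasing, decreasing)`.  All channels are increasing (and neither stable nor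
decreasing) at layer `0`; the classification at layer `ℓ+1` is as in the paper. -/
def chClass (N : SumGNN Col) : (ℓ : ℕ) → Fin (N.δ ℓ) → Prop × Prop × Prop
  | 0, _ => (False, True, False)
  | (ℓ + 1), i =>
      let St : Fin (N.δ ℓ) → Prop := fun j => (chClass N ℓ j).1
      let Inc : Fin (N.δ ℓ) → Prop := fun j => (chClass N ℓ j).2.1
      let Dec : Fin (N.δ ℓ) → Prop := fun j => (chClass N ℓ j).2.2
      let Und : Fin (N.δ ℓ) → Prop := fun j => ¬ St j ∧ ¬ Inc j ∧ ¬ Dec j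
      let stable : Prop :=
        (∀ c : Col, ∀ j, N.B c (ℓ + 1) i j = 0) ∧
        (∀ j, N.A (ℓ + 1) i j ≠ 0 → St j)
      let inc : Prop := ¬ stable ∧ ∀ j,
        (Inc j → 0 ≤ N.A (ℓ + 1) i j) ∧
        (Dec j → N.A (ℓ + 1) i j ≤ 0 ∧ ∀ c : Col, N.B c (ℓ + 1) i j = 0) ∧
        (Und j → N.A (ℓ + 1) i j = 0 ∧ ∀ c : Col, N.B c (ℓ + 1) i j = 0) ∧
        (∀ c : Col, 0 ≤ N.B c (ℓ + 1) i j)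
      let dec : Prop := ¬ stable ∧ ∀ j,
        (Inc j → N.A (ℓ + 1) i j ≤ 0) ∧
        (Dec j → 0 ≤ N.A (ℓ + 1) i j ∧ ∀ c : Col, N.B c (ℓ + 1) i j = 0) ∧
        (Und j → N.A (ℓ + 1) i j = 0 ∧ ∀ c : Col, N.B c (ℓ + 1) i j = 0) ∧
        (∀ c : Col, N.B c (ℓ + 1) i j ≤ 0)
      (stable, inc, dec)

/-- Channel `i` is stable at layer `ℓ`. -/
def Stable (N : SumGNN Col) (ℓ : ℕ) (i : Fin (N.δ ℓ)) : Prop := (chClass N ℓ i).1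

/-- Channel `i` is increasing at layer `ℓ`. -/
def Increasing (N : SumGNN Col) (ℓ : ℕ) (i : Fin (N.δ ℓ)) : Prop := (chClass N ℓ i).2.1

/-- Channel `i` is decreasing at layer `ℓ`. -/
def Decreasing (N : SumGNN Col) (ℓ : ℕ) (i : Fin (N.δ ℓ)) : Prop := (chClass N ℓ i).2.2

/-- Channel `i` is undetermined at layer `ℓ`: neither stable, increasing, nor
decreasing. -/
def Undetermined (N : SumGNN Col) (ℓ : ℕ) (i : Fin (N.δ ℓ)) : Prop :=
  ¬ Stable N ℓ i ∧ ¬ Increasing N ℓ i ∧ ¬ Decreasing N ℓ i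

/-- The sequence `y_ℓ := ReLU (B^{c_ℓ}_ℓ y_{ℓ-1})` (computed componentwise) from the
definition of unbounded channels, for the colour sequence `cs` and initial vector
`y0`. -/
noncomputable def ySeq (N : SumGNN Col) (cs : ℕ → Col) (y0 : Fin (N.δ 0) → ℝ) :
    (ℓ : ℕ) → Fin (N.δ ℓ) → ℝ
  | 0 => y0
  | (ℓ + 1) => fun i =>
      max (∑ j : Fin (N.δ ℓ), N.B (cs (ℓ + 1)) (ℓ + 1) i j * ySeq N cs y0 ℓ j) 0

/-- Channel `p` is unbounded at layer `L`: there are a Boolean vector `y₀` of dimension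
`δ 0` and colours `c₁, …, c_L` such that, with `y_ℓ := ReLU (B^{c_ℓ}_ℓ y_{ℓ-1})` for
`1 ≤ ℓ ≤ L-1`, the `p`-th component of `B^{c_L}_L y_{L-1}` is negative. -/
noncomputable def Unbounded (N : SumGNN Col) (p : Fin (N.δ N.L)) : Prop :=
  ∃ (y0 : Fin (N.δ 0) → ℝ) (cs : ℕ → Col),
    (∀ k, y0 k = 0 ∨ y0 k = 1) ∧
    (∑ j : Fin (N.δ (N.L - 1)), N.B (cs N.L) N.L p j * ySeq N cs y0 (N.L - 1) j) < 0
section Aux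

lemma neigh_finite {Col : Type} {δ' : ℕ} {D : Set (GFact Col δ')} (hD : D.Finite)
    (c : Col) (a : ℕ) : {b : ℕ | GFact.binary c a b ∈ D}.Finite := by
  have h : {b : ℕ | GFact.binary c a b ∈ D} = (fun b => GFact.binary c a b) ⁻¹' D := rfl
  rw [h]
  exact hD.preimage (fun x _ y _ h => by injection h with h1 h2 h3)

lemma gnnVal_nonneg {Col : Type} [Fintype Col] (N : SumGNN Col)
    (D : Set (GFact Col (N.δ 0))) (ℓ : ℕ) (a : ℕ) (i : Fin (N.δ ℓ)) :
    0 ≤ gnnVal N D ℓ a i := by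
  cases ℓ with
  | zero => simp only [gnnVal]; split <;> norm_num
  | succ ℓ => simp only [gnnVal]; exact N.act_nonneg _ _

lemma finsum_mem_mono_aux {s' s : Set ℕ} (hs : s.Finite) (hsub : s' ⊆ s)
    {f g : ℕ → ℝ} (hfg : ∀ b ∈ s', f b ≤ g b) (hg : ∀ b ∈ s, 0 ≤ g b) :
    ∑ᶠ b ∈ s', f b ≤ ∑ᶠ b ∈ s, g b := by
  have hs' := hs.subset hsub
  rw [finsum_mem_eq_finite_toFinset_sum _ hs', finsum_mem_eq_finite_toFinset_sum _ hs]
  calc ∑ b ∈ hs'.toFinset, f b ≤ ∑ b ∈ hs'.toFinset, g b :=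
        Finset.sum_le_sum (fun b hb => hfg b (hs'.mem_toFinset.mp hb))
    _ ≤ ∑ b ∈ hs.toFinset, g b :=
        Finset.sum_le_sum_of_subset_of_nonneg
          (fun b hb => hs.mem_toFinset.mpr (hsub (hs'.mem_toFinset.mp hb)))
          (fun b hb _ => hg b (hs.mem_toFinset.mp hb))

lemma stable_succ_iff {Col : Type} (N : SumGNN Col) (ℓ : ℕ) (i : Fin (N.δ (ℓ + 1))) :
    Stable N (ℓ + 1) i ↔
      (∀ c : Col, ∀ j, N.B c (ℓ + 1) i j = 0) ∧
      (∀ j, N.A (ℓ + 1) i j ≠ 0 → Stable N ℓ j) := Iff.rfl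

lemma inc_succ_iff {Col : Type} (N : SumGNN Col) (ℓ : ℕ) (i : Fin (N.δ (ℓ + 1))) :
    Increasing N (ℓ + 1) i ↔
      ¬ Stable N (ℓ + 1) i ∧ ∀ j,
        (Increasing N ℓ j → 0 ≤ N.A (ℓ + 1) i j) ∧
        (Decreasing N ℓ j → N.A (ℓ + 1) i j ≤ 0 ∧ ∀ c : Col, N.B c (ℓ + 1) i j = 0) ∧
        ((¬ Stable N ℓ j ∧ ¬ Increasing N ℓ j ∧ ¬ Decreasing N ℓ j) →
          N.A (ℓ + 1) i j = 0 ∧ ∀ c : Col, N.B c (ℓ + 1) i j = 0) ∧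
        (∀ c : Col, 0 ≤ N.B c (ℓ + 1) i j) := Iff.rfl

lemma dec_succ_iff {Col : Type} (N : SumGNN Col) (ℓ : ℕ) (i : Fin (N.δ (ℓ + 1))) :
    Decreasing N (ℓ + 1) i ↔
      ¬ Stable N (ℓ + 1) i ∧ ∀ j,
        (Increasing N ℓ j → N.A (ℓ + 1) i j ≤ 0) ∧
        (Decreasing N ℓ j → 0 ≤ N.A (ℓ + 1) i j ∧ ∀ c : Col, N.B c (ℓ + 1) i j = 0) ∧
        ((¬ Stable N ℓ j ∧ ¬ Increasing N ℓ j ∧ ¬ Decreasing N ℓ j) →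
          N.A (ℓ + 1) i j = 0 ∧ ∀ c : Col, N.B c (ℓ + 1) i j = 0) ∧
        (∀ c : Col, N.B c (ℓ + 1) i j ≤ 0) := Iff.rfl

end Aux

/-- Let `D' ⊆ D` be datasets and `v_a` a vertex of `enc D'`; let
`v_ℓ` and `v'_ℓ` be the vectors computed for `v_a` in layer `ℓ` when `N` is applied to
`enc D` and `enc D'` respectively.  If channel `i` is stable at layer `ℓ` then
`v'_ℓ[i] = v_ℓ[i]`; if it is increasing then `v'_ℓ[i] ≤ v_ℓ[i]`; and if it is
decreasing then `v'_ℓ[i] ≥ v_ℓ[i]`. -/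
theorem channel_class_monotonic {Col : Type} [Fintype Col] (N : SumGNN Col)
    (D' D : Set (GFact Col (N.δ 0))) (hD' : D'.Finite) (hD : D.Finite) (hsub : D' ⊆ D)
    (a : ℕ) (ha : a ∈ constsOf D') (ℓ : ℕ) (hℓ : ℓ ≤ N.L) (i : Fin (N.δ ℓ)) :
    (Stable N ℓ i → gnnVal N D' ℓ a i = gnnVal N D ℓ a i) ∧
    (Increasing N ℓ i → gnnVal N D' ℓ a i ≤ gnnVal N D ℓ a i) ∧
    (Decreasing N ℓ i → gnnVal N D ℓ a i ≤ gnnVal N D' ℓ a i) := by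
  clear ha hℓ
  induction ℓ generalizing a with
  | zero =>
    refine ⟨fun h => False.elim h, fun _ => ?_, fun h => False.elim h⟩
    simp only [gnnVal]
    by_cases h : GFact.unary i a ∈ D'
    · simp [h, hsub h]
    · simp only [h, if_false]
      split <;> norm_num
  | succ ℓ ih =>
    have hsubN : ∀ c : Col, {b : ℕ | GFact.binary c a b ∈ D'} ⊆
        {b : ℕ | GFact.binary c a b ∈ D} := fun c b hb => hsub hb
    refine ⟨?_, ?_, ?_⟩
    · -- stable
      intro hst
      obtain ⟨hB, hA⟩ := (stable_succ_iff N ℓ i).mp hst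
      simp only [gnnVal]
      have hAsum : (∑ j : Fin (N.δ ℓ), N.A (ℓ + 1) i j * gnnVal N D' ℓ a j)
          = ∑ j : Fin (N.δ ℓ), N.A (ℓ + 1) i j * gnnVal N D ℓ a j := by
        refine Finset.sum_congr rfl (fun j _ => ?_)
        by_cases hA0 : N.A (ℓ + 1) i j = 0
        · simp [hA0]
        · rw [(ih a j).1 (hA j hA0)]
      rw [hAsum]
      simp [hB]
    · -- increasing
      intro hinc
      obtain ⟨-, hcond⟩ := (inc_succ_iff N ℓ i).mp hinc
      simp only [gnnVal]
      apply N.act_mono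
      have hAsum : (∑ j : Fin (N.δ ℓ), N.A (ℓ + 1) i j * gnnVal N D' ℓ a j)
          ≤ ∑ j : Fin (N.δ ℓ), N.A (ℓ + 1) i j * gnnVal N D ℓ a j := by
        refine Finset.sum_le_sum (fun j _ => ?_)
        by_cases hs : Stable N ℓ j
        · rw [(ih a j).1 hs]
        · by_cases hi : Increasing N ℓ j
          · exact mul_le_mul_of_nonneg_left ((ih a j).2.1 hi) ((hcond j).1 hi)
          · by_cases hd : Decreasing N ℓ j
            · exact mul_le_mul_of_nonpos_left ((ih a j).2.2 hd) ((hcond j).2.1 hd).1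
            · rw [((hcond j).2.2.1 ⟨hs, hi, hd⟩).1]; simp
      have hBsum : (∑ c : Col, ∑ j : Fin (N.δ ℓ), N.B c (ℓ + 1) i j *
            ∑ᶠ b ∈ {b : ℕ | GFact.binary c a b ∈ D'}, gnnVal N D' ℓ b j)
          ≤ ∑ c : Col, ∑ j : Fin (N.δ ℓ), N.B c (ℓ + 1) i j *
            ∑ᶠ b ∈ {b : ℕ | GFact.binary c a b ∈ D}, gnnVal N D ℓ b j := by
        refine Finset.sum_le_sum (fun c _ => Finset.sum_le_sum (fun j _ => ?_))
        have hSle : (∑ᶠ b ∈ {b : ℕ | GFact.binary c a b ∈ D'}, gnnVal N D' ℓ b j)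
            ≤ ∑ᶠ b ∈ {b : ℕ | GFact.binary c a b ∈ D}, gnnVal N D ℓ b j → _ := id
        by_cases hd : Decreasing N ℓ j
        · rw [((hcond j).2.1 hd).2 c]; simp
        · by_cases hs : Stable N ℓ j
          · refine mul_le_mul_of_nonneg_left ?_ ((hcond j).2.2.2 c)
            exact finsum_mem_mono_aux (neigh_finite hD c a) (hsubN c)
              (fun b _ => ((ih b j).1 hs).le) (fun b _ => gnnVal_nonneg N D ℓ b j)
          · by_cases hi : Increasing N ℓ j
            · refine mul_le_mul_of_nonneg_left ?_ ((hcond j).2.2.2 c)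
              exact finsum_mem_mono_aux (neigh_finite hD c a) (hsubN c)
                (fun b _ => (ih b j).2.1 hi) (fun b _ => gnnVal_nonneg N D ℓ b j)
            · rw [((hcond j).2.2.1 ⟨hs, hi, hd⟩).2 c]; simp
      exact add_le_add (add_le_add le_rfl hAsum) hBsum
    · -- decreasing
      intro hdec
      obtain ⟨-, hcond⟩ := (dec_succ_iff N ℓ i).mp hdec
      simp only [gnnVal]
      apply N.act_mono
      have hAsum : (∑ j : Fin (N.δ ℓ), N.A (ℓ + 1) i j * gnnVal N D ℓ a j)
          ≤ ∑ j : Fin (N.δ ℓ), N.A (ℓ + 1) i j * gnnVal N D' ℓ a j := by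
        refine Finset.sum_le_sum (fun j _ => ?_)
        by_cases hs : Stable N ℓ j
        · rw [(ih a j).1 hs]
        · by_cases hi : Increasing N ℓ j
          · exact mul_le_mul_of_nonpos_left ((ih a j).2.1 hi) ((hcond j).1 hi)
          · by_cases hd : Decreasing N ℓ j
            · exact mul_le_mul_of_nonneg_left ((ih a j).2.2 hd) ((hcond j).2.1 hd).1
            · rw [((hcond j).2.2.1 ⟨hs, hi, hd⟩).1]; simp
      have hBsum : (∑ c : Col, ∑ j : Fin (N.δ ℓ), N.B c (ℓ + 1) i j *
            ∑ᶠ b ∈ {b : ℕ | GFact.binary c a b ∈ D}, gnnVal N D ℓ b j)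
          ≤ ∑ c : Col, ∑ j : Fin (N.δ ℓ), N.B c (ℓ + 1) i j *
            ∑ᶠ b ∈ {b : ℕ | GFact.binary c a b ∈ D'}, gnnVal N D' ℓ b j := by
        refine Finset.sum_le_sum (fun c _ => Finset.sum_le_sum (fun j _ => ?_))
        by_cases hd : Decreasing N ℓ j
        · rw [((hcond j).2.1 hd).2 c]; simp
        · by_cases hs : Stable N ℓ j
          · refine mul_le_mul_of_nonpos_left ?_ ((hcond j).2.2.2 c)
            exact finsum_mem_mono_aux (neigh_finite hD c a) (hsubN c)
              (fun b _ => ((ih b j).1 hs).le) (fun b _ => gnnVal_nonneg N D ℓ b j)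
          · by_cases hi : Increasing N ℓ j
            · refine mul_le_mul_of_nonpos_left ?_ ((hcond j).2.2.2 c)
              exact finsum_mem_mono_aux (neigh_finite hD c a) (hsubN c)
                (fun b _ => (ih b j).2.1 hi) (fun b _ => gnnVal_nonneg N D ℓ b j)
            · rw [((hcond j).2.2.1 ⟨hs, hi, hd⟩).2 c]; simp
      exact add_le_add (add_le_add le_rfl hAsum) hBsum
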